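/- Let P be a convex integer polygon containing both the point (0,0) and the point (0, ℓ(P)), where ℓ(P) is the lattice diameter of P. Then P lies in the slab |x₁| ≤ ℓ(P) + 2, and no integer point lying on either of the lines x₁ = ℓ(P) + 1 or x₁ = −(ℓ(P) + 1) belongs to P. -/

import Mathlib

open Set

/-- The point of `ℝ²` corresponding to an integer point. -/
def intPt (p : ℤ × ℤ) : ℝ × ℝ := ((p.1 : ℝ), (p.2 : ℝ))

/-- A convex integer polygon: the convex hull of a finite set of integer points,
with nonempty interior. -/
def IsConvexIntegerPolygon (P : Set (ℝ × ℝ)) : Prop :=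
  ∃ V : Finset (ℤ × ℤ), P = convexHull ℝ (intPt '' ↑V) ∧ (interior P).Nonempty

/-- A line in the plane. -/
def IsLine (L : Set (ℝ × ℝ)) : Prop :=
  ∃ a b c : ℝ, ¬(a = 0 ∧ b = 0) ∧ L = {x : ℝ × ℝ | a * x.1 + b * x.2 = c}

/-- The set of integer points of the plane. -/
def intPts : Set (ℝ × ℝ) := {x : ℝ × ℝ | ∃ p : ℤ × ℤ, x = intPt p}

/-- The lattice diameter of `P` equals `ℓ`: the maximum over all lines `L` of
`|P ∩ ℤ² ∩ L| - 1` is `ℓ`. -/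
def LatticeDiamIs (P : Set (ℝ × ℝ)) (ℓ : ℕ) : Prop :=
  (∃ L, IsLine L ∧ (P ∩ intPts ∩ L).ncard = ℓ + 1) ∧
  ∀ L, IsLine L → (P ∩ intPts ∩ L).ncard ≤ ℓ + 1

lemma intPt_injective : Function.Injective intPt := by
  intro p q h
  simp only [intPt, Prod.ext_iff] at h
  exact Prod.ext (by exact_mod_cast h.1) (by exact_mod_cast h.2)

lemma convex_absFst (c : ℝ) : Convex ℝ {x : ℝ × ℝ | |x.1| ≤ c} := by
  have h1 : Convex ℝ {x : ℝ × ℝ | x.1 ≤ c} :=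
    convex_halfSpace_le (LinearMap.fst ℝ ℝ ℝ).isLinear c
  have h2 : Convex ℝ {x : ℝ × ℝ | -c ≤ x.1} :=
    convex_halfSpace_ge (LinearMap.fst ℝ ℝ ℝ).isLinear (-c)
  have he : {x : ℝ × ℝ | |x.1| ≤ c} = {x : ℝ × ℝ | x.1 ≤ c} ∩ {x : ℝ × ℝ | -c ≤ x.1} := by
    ext x; simp only [mem_setOf_eq, mem_inter_iff, abs_le]; tauto
  rw [he]; exact h1.inter h2

lemma convex_absSnd (c : ℝ) : Convex ℝ {x : ℝ × ℝ | |x.2| ≤ c} := by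
  have h1 : Convex ℝ {x : ℝ × ℝ | x.2 ≤ c} :=
    convex_halfSpace_le (LinearMap.snd ℝ ℝ ℝ).isLinear c
  have h2 : Convex ℝ {x : ℝ × ℝ | -c ≤ x.2} :=
    convex_halfSpace_ge (LinearMap.snd ℝ ℝ ℝ).isLinear (-c)
  have he : {x : ℝ × ℝ | |x.2| ≤ c} = {x : ℝ × ℝ | x.2 ≤ c} ∩ {x : ℝ × ℝ | -c ≤ x.2} := by
    ext x; simp only [mem_setOf_eq, mem_inter_iff, abs_le]; tauto
  rw [he]; exact h1.inter h2

lemma mem_of_comb {P : Set (ℝ × ℝ)} (hP : Convex ℝ P) {u v z : ℝ × ℝ}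
    (hu : u ∈ P) (hv : v ∈ P) {t : ℝ} (h0 : 0 ≤ t) (h1 : t ≤ 1)
    (h : z = (1 - t) • u + t • v) : z ∈ P := by
  rw [h]; exact hP hu hv (by linarith) h0 (by ring)

lemma latticeFinite {P : Set (ℝ × ℝ)} (hP : IsConvexIntegerPolygon P) :
    (P ∩ intPts).Finite := by
  obtain ⟨V, hPe, -⟩ := hP
  set M : ℕ := V.sup (fun p => max p.1.natAbs p.2.natAbs) with hM
  have hbound : ∀ x ∈ P, |x.1| ≤ (M : ℝ) ∧ |x.2| ≤ (M : ℝ) := by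
    have hsub : P ⊆ {x : ℝ × ℝ | |x.1| ≤ (M : ℝ)} ∩ {x : ℝ × ℝ | |x.2| ≤ (M : ℝ)} := by
      rw [hPe]
      apply convexHull_min _ ((convex_absFst _).inter (convex_absSnd _))
      rintro x ⟨p, hp, rfl⟩
      have hsup : max p.1.natAbs p.2.natAbs ≤ M :=
        Finset.le_sup (f := fun p : ℤ × ℤ => max p.1.natAbs p.2.natAbs) hp
      have h1 : p.1.natAbs ≤ M := le_trans (le_max_left _ _) hsup
      have h2 : p.2.natAbs ≤ M := le_trans (le_max_right _ _) hsup
      constructor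
      · show |(p.1 : ℝ)| ≤ (M : ℝ)
        rw [← Int.cast_abs]
        exact_mod_cast (Int.abs_eq_natAbs p.1 ▸ (by exact_mod_cast h1 : (p.1.natAbs : ℤ) ≤ (M : ℤ)))
      · show |(p.2 : ℝ)| ≤ (M : ℝ)
        rw [← Int.cast_abs]
        exact_mod_cast (Int.abs_eq_natAbs p.2 ▸ (by exact_mod_cast h2 : (p.2.natAbs : ℤ) ≤ (M : ℤ)))
    exact fun x hx => hsub hx
  have : P ∩ intPts ⊆ intPt '' ((Finset.Icc (-(M : ℤ)) (M : ℤ) ×ˢ Finset.Icc (-(M : ℤ)) (M : ℤ) : Finset (ℤ × ℤ)) : Set (ℤ × ℤ)) := by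
    rintro x ⟨hxP, p, rfl⟩
    refine ⟨p, ?_, rfl⟩
    obtain ⟨hb1, hb2⟩ := hbound _ hxP
    simp only [Finset.coe_product, Finset.coe_Icc, Set.mem_prod, Set.mem_Icc]
    have h1 : |p.1| ≤ (M : ℤ) := by
      have : |(p.1 : ℝ)| ≤ (M : ℝ) := hb1
      rw [← Int.cast_abs] at this; exact_mod_cast this
    have h2 : |p.2| ≤ (M : ℤ) := by
      have : |(p.2 : ℝ)| ≤ (M : ℝ) := hb2
      rw [← Int.cast_abs] at this; exact_mod_cast this
    exact ⟨abs_le.mp h1, abs_le.mp h2⟩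
  exact Set.Finite.subset ((Set.Finite.image intPt (Finset.finite_toSet _))) this

lemma contra_card {P : Set (ℝ × ℝ)} (hfin : (P ∩ intPts).Finite) {ℓ : ℕ}
    (hub : ∀ L, IsLine L → (P ∩ intPts ∩ L).ncard ≤ ℓ + 1)
    {L : Set (ℝ × ℝ)} (hL : IsLine L) {n : ℕ} (hn : ℓ + 1 < n)
    (g : ℕ → ℤ × ℤ) (hinj : ∀ i < n, ∀ j < n, g i = g j → i = j)
    (hmem : ∀ i < n, intPt (g i) ∈ P ∧ intPt (g i) ∈ L) : False := by
  classical
  set F : Finset (ℝ × ℝ) := (Finset.range n).image (fun i => intPt (g i)) with hF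
  have hcard : F.card = n := by
    rw [hF, Finset.card_image_of_injOn, Finset.card_range]
    intro i hi j hj hij
    exact hinj i (Finset.mem_range.mp hi) j (Finset.mem_range.mp hj) (intPt_injective hij)
  have hsub : (F : Set (ℝ × ℝ)) ⊆ P ∩ intPts ∩ L := by
    intro x hx
    simp only [hF, Finset.coe_image, Finset.coe_range, Set.mem_image, Set.mem_Iio] at hx
    obtain ⟨i, hi, rfl⟩ := hx
    exact ⟨⟨(hmem i hi).1, ⟨g i, rfl⟩⟩, (hmem i hi).2⟩
  have h1 : (F : Set (ℝ × ℝ)).ncard ≤ (P ∩ intPts ∩ L).ncard :=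
    Set.ncard_le_ncard hsub (hfin.subset Set.inter_subset_left)
  rw [Set.ncard_coe_finset, hcard] at h1
  exact absurd (le_trans h1 (hub L hL)) (by omega)
lemma vert_mem {P : Set (ℝ × ℝ)} (hP : Convex ℝ P) {ℓ : ℕ}
    (h0 : intPt (0, 0) ∈ P) (hℓ : intPt (0, (ℓ : ℤ)) ∈ P)
    {c : ℝ} (hc0 : 0 ≤ c) (hcl : c ≤ (ℓ : ℝ)) : ((0 : ℝ), c) ∈ P := by
  rcases Nat.eq_zero_or_pos ℓ with h | h
  · subst h
    have : c = 0 := le_antisymm (by simpa using hcl) hc0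
    subst this
    simpa [intPt] using h0
  · have hl0 : (0 : ℝ) < (ℓ : ℝ) := by exact_mod_cast h
    refine mem_of_comb hP h0 hℓ (t := c / (ℓ : ℝ)) (by positivity)
      (by rw [div_le_one hl0]; exact hcl) ?_
    simp only [intPt, Prod.ext_iff, Prod.smul_mk, Prod.mk_add_mk, smul_eq_mul]
    constructor
    · push_cast; ring
    · push_cast; field_simp; ring

lemma line_through (p q : ℝ × ℝ) (h : p ≠ q) : ∃ L, IsLine L ∧ p ∈ L ∧ q ∈ L := by
  refine ⟨{x : ℝ × ℝ | (q.2 - p.2) * x.1 + (p.1 - q.1) * x.2 = (q.2 - p.2) * p.1 + (p.1 - q.1) * p.2},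
    ⟨q.2 - p.2, p.1 - q.1, _, ?_, rfl⟩, ?_, ?_⟩
  · rintro ⟨h1, h2⟩
    apply h
    have : p.1 = q.1 := by linarith
    have : p.2 = q.2 := by linarith
    exact Prod.ext ‹p.1 = q.1› ‹p.2 = q.2›
  · simp [Set.mem_setOf_eq]
  · show (q.2 - p.2) * q.1 + (p.1 - q.1) * q.2 = _
    ring_nf
  
lemma one_le_ell {P : Set (ℝ × ℝ)} (hP : IsConvexIntegerPolygon P) {ℓ : ℕ}
    (hdiam : LatticeDiamIs P ℓ) : 1 ≤ ℓ := by
  by_contra hc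
  have hl0 : ℓ = 0 := by omega
  subst hl0
  obtain ⟨V, hPe, hint⟩ := hP
  by_cases hcard : V.card ≤ 1
  · -- interior empty
    interval_cases h : V.card
    · have : V = ∅ := Finset.card_eq_zero.mp h
      subst this
      simp only [Finset.coe_empty, Set.image_empty, convexHull_empty] at hPe
      rw [hPe] at hint
      simpa using hint
    · obtain ⟨v, hv⟩ := Finset.card_eq_one.mp h
      subst hv
      simp only [Finset.coe_singleton, Set.image_singleton, convexHull_singleton] at hPe
      rw [hPe] at hint
      rw [interior_singleton] at hint
      simpa using hint
  · have h2 : 1 < V.card := by omega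
    obtain ⟨v, hv, w, hw, hvw⟩ := Finset.one_lt_card.mp h2
    obtain ⟨L, hL, hvL, hwL⟩ := line_through (intPt v) (intPt w)
      (fun hh => hvw (intPt_injective hh))
    have hvP : intPt v ∈ P := hPe ▸ subset_convexHull ℝ _ ⟨v, hv, rfl⟩
    have hwP : intPt w ∈ P := hPe ▸ subset_convexHull ℝ _ ⟨w, hw, rfl⟩
    refine contra_card (latticeFinite ⟨V, hPe, hint⟩) hdiam.2 hL (n := 2) (by omega)
      (fun i => if i = 0 then v else w) ?_ ?_
    · intro i hi j hj hij
      interval_cases i <;> interval_cases j <;> first | rfl | (exact absurd hij hvw) | (exact absurd hij.symm hvw)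
    · intro i hi
      interval_cases i
      · exact ⟨by simpa using hvP, by simpa using hvL⟩
      · exact ⟨by simpa using hwP, by simpa using hwL⟩
lemma noPt_side {P : Set (ℝ × ℝ)} (hP : IsConvexIntegerPolygon P) {ℓ : ℕ}
    (hdiam : LatticeDiamIs P ℓ)
    (h0 : intPt (0, 0) ∈ P) (hℓ : intPt (0, (ℓ : ℤ)) ∈ P) :
    ∀ p : ℤ × ℤ, (p.1 = (ℓ : ℤ) + 1 ∨ p.1 = -((ℓ : ℤ) + 1)) → intPt p ∉ P := by
  rintro ⟨a, b⟩ hcase hmem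
  have hconv : Convex ℝ P := by
    obtain ⟨V, hPe, -⟩ := hP; rw [hPe]; exact convex_convexHull ℝ _
  set N : ℤ := (ℓ : ℤ) + 1 with hN
  have hNpos : 0 < N := by omega
  obtain ⟨ε, hε, hεa⟩ : ∃ ε : ℤ, (ε = 1 ∨ ε = -1) ∧ a = ε * N := by
    rcases hcase with h | h
    · exact ⟨1, Or.inl rfl, by omega⟩
    · exact ⟨-1, Or.inr rfl, by omega⟩
  set k : ℤ := b % N with hk
  set t : ℤ := b / N with ht
  have hk0 : 0 ≤ k := Int.emod_nonneg b (by omega)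
  have hkN : k < N := Int.emod_lt_of_pos b hNpos
  have hbt : N * t + k = b := Int.mul_ediv_add_emod b N
  have hε2 : (ε : ℝ) * (ε : ℝ) = 1 := by rcases hε with rfl | rfl <;> norm_num
  have hNR : ((N : ℝ)) ≠ 0 := by exact_mod_cast hNpos.ne'
  -- the line
  set L : Set (ℝ × ℝ) := {x : ℝ × ℝ | ((ε * t : ℤ) : ℝ) * x.1 + (-1) * x.2 = ((-k : ℤ) : ℝ)}
    with hLdef
  have hL : IsLine L := ⟨_, -1, _, fun h => by norm_num at h, rfl⟩
  refine contra_card (latticeFinite hP) hdiam.2 hL (n := ℓ + 2) (by omega)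
    (fun j => (ε * j, k + j * t)) ?_ ?_
  · intro i hi j hj hij
    have h1 : ε * (i : ℤ) = ε * (j : ℤ) := congrArg Prod.fst hij
    rcases hε with rfl | rfl <;> omega
  · intro j hj
    have hjN : (j : ℤ) ≤ N := by omega
    constructor
    · -- in P
      refine mem_of_comb hconv
        (vert_mem hconv h0 hℓ (c := (k : ℝ)) (by exact_mod_cast hk0) (by exact_mod_cast (by omega : k ≤ (ℓ:ℤ)))) hmem
        (t := (j : ℝ) / (N : ℝ)) (by positivity) ?_ ?_
      · rw [div_le_one (by exact_mod_cast hNpos)]; exact_mod_cast hjN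
      · simp only [intPt, Prod.ext_iff, Prod.smul_mk, Prod.mk_add_mk, smul_eq_mul]
        constructor
        · rw [hεa]; push_cast; field_simp; ring
        · have hb : ((N : ℝ)) * (t : ℝ) + (k : ℝ) = (b : ℝ) := by exact_mod_cast hbt
          push_cast
          field_simp
          linear_combination ((j : ℝ)) * hb
    · -- on L
      show ((ε * t : ℤ) : ℝ) * ((ε * (j : ℤ) : ℤ) : ℝ) + (-1) * (((k + j * t : ℤ)) : ℝ) = ((-k : ℤ) : ℝ)
      push_cast
      linear_combination ((t : ℝ) * (j : ℝ)) * hε2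
lemma slice_pt {P : Set (ℝ × ℝ)} (hconv : Convex ℝ P) {ℓ : ℕ}
    (h0 : intPt (0, 0) ∈ P) (hℓ : intPt (0, (ℓ : ℤ)) ∈ P) {a b A ε y : ℤ}
    (hε : ε = 1 ∨ ε = -1) (hεa : a = ε * A) (hAN : (ℓ : ℤ) + 1 < A)
    (hmem : intPt (a, b) ∈ P)
    (h1 : ((ℓ : ℤ) + 1) * b ≤ A * y)
    (h2 : A * y ≤ ((ℓ : ℤ) + 1) * b + (ℓ : ℤ) * (A - ((ℓ : ℤ) + 1))) :
    intPt (ε * ((ℓ : ℤ) + 1), y) ∈ P := by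
  set N : ℤ := (ℓ : ℤ) + 1 with hN
  have hA0 : (0 : ℝ) < (A : ℝ) := by exact_mod_cast (by omega : (0:ℤ) < A)
  have hAN0 : (0 : ℝ) < ((A : ℝ) - (N : ℝ)) := by
    exact_mod_cast (by omega : (0:ℤ) < A - N)
  have hN0 : (0 : ℝ) < (N : ℝ) := by exact_mod_cast (by omega : (0:ℤ) < N)
  set cR : ℝ := ((A : ℝ) * (y : ℝ) - (N : ℝ) * (b : ℝ)) / ((A : ℝ) - (N : ℝ)) with hcR
  have h1R : (N : ℝ) * (b : ℝ) ≤ (A : ℝ) * (y : ℝ) := by exact_mod_cast h1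
  have h2R : (A : ℝ) * (y : ℝ) ≤ (N : ℝ) * (b : ℝ) + (ℓ : ℝ) * ((A : ℝ) - (N : ℝ)) := by
    exact_mod_cast h2
  have hc0 : 0 ≤ cR := div_nonneg (by linarith) (by linarith)
  have hcl : cR ≤ (ℓ : ℝ) := by
    rw [hcR, div_le_iff₀ hAN0]; linarith
  have haR : ((a : ℤ) : ℝ) = (ε : ℝ) * (A : ℝ) := by exact_mod_cast congrArg (Int.cast : ℤ → ℝ) hεa
  refine mem_of_comb hconv (vert_mem hconv h0 hℓ hc0 hcl) hmem
    (t := (N : ℝ) / (A : ℝ)) (by positivity) (by rw [div_le_one hA0]; push_cast; linarith) ?_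
  simp only [intPt, Prod.ext_iff, Prod.smul_mk, Prod.mk_add_mk, smul_eq_mul]
  constructor
  · push_cast [haR]
    field_simp
    ring
  · show (y : ℝ) = (1 - (N : ℝ) / (A : ℝ)) * cR + (N : ℝ) / (A : ℝ) * (b : ℝ)
    rw [hcR]
    field_simp
    ring
lemma bound_side {P : Set (ℝ × ℝ)} (hP : IsConvexIntegerPolygon P) {ℓ : ℕ}
    (hdiam : LatticeDiamIs P ℓ)
    (h0 : intPt (0, 0) ∈ P) (hℓ : intPt (0, (ℓ : ℤ)) ∈ P) :
    ∀ p : ℤ × ℤ, intPt p ∈ P → |p.1| ≤ (ℓ : ℤ) + 2 := by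
  rintro ⟨a, b⟩ hmem
  by_contra hcon
  push_neg at hcon
  have hconv : Convex ℝ P := by
    obtain ⟨V, hPe, -⟩ := hP; rw [hPe]; exact convex_convexHull ℝ _
  have hl1 : 1 ≤ ℓ := one_le_ell hP hdiam
  set A : ℤ := |a| with hA
  have hA3 : (ℓ : ℤ) + 3 ≤ A := by omega
  obtain ⟨ε, hε, hεa⟩ : ∃ ε : ℤ, (ε = 1 ∨ ε = -1) ∧ a = ε * A := by
    rcases abs_cases a with ⟨h1, h2⟩ | ⟨h1, h2⟩
    · exact ⟨1, Or.inl rfl, by omega⟩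
    · exact ⟨-1, Or.inr rfl, by omega⟩
  obtain ⟨y, r, hdm, hr0, hrA⟩ :
      ∃ y r : ℤ, A * y + r = ((ℓ : ℤ) + 1) * b + A - 1 ∧ 0 ≤ r ∧ r < A :=
    ⟨_, _, Int.mul_ediv_add_emod _ _, Int.emod_nonneg _ (by omega), Int.emod_lt_of_pos _ (by omega)⟩
  have hy1 : ((ℓ : ℤ) + 1) * b ≤ A * y := by linarith
  have hside : (ε * ((ℓ : ℤ) + 1) = (ℓ : ℤ) + 1 ∨ ε * ((ℓ : ℤ) + 1) = -((ℓ : ℤ) + 1)) := by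
    rcases hε with rfl | rfl
    · exact Or.inl (by ring)
    · exact Or.inr (by ring)
  rcases Nat.lt_or_ge ℓ 2 with hl2 | hl2
  · -- ℓ = 1
    have hl : ℓ = 1 := by omega
    subst hl
    have hdm' : A * y + r = 2 * b + A - 1 := by push_cast at hdm ⊢; linarith
    by_cases hrz : r = 0
    · -- 2b ≡ 1 (mod A): three collinear points with slope (2s+1)/2
      have hmA : A * (y - 1) = 2 * b - 1 := by
        have hh : A * (y - 1) = A * y - A := by ring
        linarith
      have hA5 : (5 : ℤ) ≤ A := by
        by_contra hh
        have h4 : A = 4 := by omega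
        rw [h4] at hmA
        omega
      obtain ⟨s, hbs⟩ : ∃ s : ℤ, 2 * b = A * (2 * s + 1) + 1 := by
        rcases Int.even_or_odd (y - 1) with ⟨u, hu⟩ | ⟨u, hu⟩
        · exfalso
          rw [hu] at hmA
          have h2 : 2 * (A * u) = 2 * b - 1 := by linarith [show A * (u + u) = 2 * (A * u) from by ring]
          obtain ⟨w, hw⟩ : ∃ w : ℤ, A * u = w := ⟨_, rfl⟩
          rw [hw] at h2
          omega
        · refine ⟨u, ?_⟩
          rw [hu] at hmA
          linarith
      have hbR : (b : ℝ) = ((A : ℝ) * (2 * (s : ℝ) + 1) + 1) / 2 := by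
        have : 2 * (b : ℝ) = (A : ℝ) * (2 * (s : ℝ) + 1) + 1 := by exact_mod_cast hbs
        linarith
      have hε2 : (ε : ℝ) * (ε : ℝ) = 1 := by rcases hε with rfl | rfl <;> norm_num
      have hAR : (0 : ℝ) < (A : ℝ) := by exact_mod_cast (by omega : (0:ℤ) < A)
      have hL : IsLine {x : ℝ × ℝ | ((ε * (2 * s + 1) : ℤ) : ℝ) * x.1 + (-2) * x.2 = (-1 : ℝ)} :=
        ⟨_, -2, _, fun h => by norm_num at h, rfl⟩
      refine contra_card (latticeFinite hP) hdiam.2 hL (n := 3) (by omega)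
        (fun i => (ε * (2 * (i : ℤ) + 1), ((i : ℤ) + 1) + (2 * (i : ℤ) + 1) * s)) ?_ ?_
      · intro i hi j hj hij
        have h1 : ε * (2 * (i : ℤ) + 1) = ε * (2 * (j : ℤ) + 1) := congrArg Prod.fst hij
        rcases hε with rfl | rfl <;> omega
      · intro i hi
        have hiA : 2 * (i : ℤ) + 1 ≤ A := by omega
        constructor
        · refine mem_of_comb hconv
            (vert_mem hconv h0 hℓ (c := (1:ℝ)/2) (by norm_num) (by norm_num))
            hmem (t := (2 * (i : ℝ) + 1) / (A : ℝ)) (by positivity) ?_ ?_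
          · rw [div_le_one hAR]; exact_mod_cast hiA
          · simp only [intPt, Prod.ext_iff, Prod.smul_mk, Prod.mk_add_mk, smul_eq_mul]
            have haR : ((a : ℤ) : ℝ) = (ε : ℝ) * (A : ℝ) := by exact_mod_cast hεa
            constructor
            · push_cast [haR]
              field_simp
              ring
            · push_cast [hbR]
              field_simp
              ring
        · show ((ε * (2 * s + 1) : ℤ) : ℝ) * ((ε * (2 * (i : ℤ) + 1) : ℤ) : ℝ)
            + (-2) * ((((i : ℤ) + 1) + (2 * (i : ℤ) + 1) * s : ℤ) : ℝ) = (-1 : ℝ)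
          push_cast
          linear_combination ((2 * (s:ℝ) + 1) * (2 * (i:ℝ) + 1)) * hε2
    · -- r ≠ 0 : lattice point at x = ε * 2
      have hy2 : A * y ≤ ((1:ℕ) : ℤ) * b + ((1:ℕ) : ℤ) * b + (A - 2) := by
        push_cast
        linarith [show (1:ℤ) ≤ r from by omega]
      have hpt : intPt (ε * (((1:ℕ) : ℤ) + 1), y) ∈ P :=
        slice_pt hconv h0 hℓ hε hεa (by omega) hmem (by push_cast at hy1 ⊢; linarith)
          (by push_cast; linarith [hy2])
      exact noPt_side hP hdiam h0 hℓ (ε * (((1:ℕ) : ℤ) + 1), y) hside hpt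
  · -- ℓ ≥ 2
    have hkey : A - 1 ≤ (ℓ : ℤ) * (A - ((ℓ : ℤ) + 1)) := by
      nlinarith [mul_nonneg (by omega : (0:ℤ) ≤ (ℓ:ℤ) - 1) (by omega : (0:ℤ) ≤ A - (ℓ:ℤ) - 3)]
    have hy2 : A * y ≤ ((ℓ : ℤ) + 1) * b + (ℓ : ℤ) * (A - ((ℓ : ℤ) + 1)) := by linarith
    have hpt : intPt (ε * ((ℓ : ℤ) + 1), y) ∈ P :=
      slice_pt hconv h0 hℓ hε hεa (by omega) hmem hy1 hy2
    exact noPt_side hP hdiam h0 hℓ (ε * ((ℓ : ℤ) + 1), y) hside hpt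

/-- Lemma: if a convex integer polygon `P` contains `(0,0)` and `(0, ℓ(P))`, where `ℓ(P)` is
its lattice diameter, then `P` lies in the slab `|x₁| ≤ ℓ(P) + 2`, and no integer point on the
lines `x₁ = ±(ℓ(P) + 1)` belongs to `P`. -/
theorem stmt14 (P : Set (ℝ × ℝ)) (hP : IsConvexIntegerPolygon P)
    (ℓ : ℕ) (hdiam : LatticeDiamIs P ℓ)
    (h0 : intPt (0, 0) ∈ P) (hℓ : intPt (0, (ℓ : ℤ)) ∈ P) :
    (∀ x ∈ P, |x.1| ≤ (ℓ : ℝ) + 2) ∧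
    (∀ p : ℤ × ℤ, (p.1 = (ℓ : ℤ) + 1 ∨ p.1 = -((ℓ : ℤ) + 1)) → intPt p ∉ P) := by
  have hB := bound_side hP hdiam h0 hℓ
  refine ⟨?_, noPt_side hP hdiam h0 hℓ⟩
  intro x hx
  obtain ⟨V, hPe, hint⟩ := hP
  have hsub : P ⊆ {x : ℝ × ℝ | |x.1| ≤ (ℓ : ℝ) + 2} := by
    rw [hPe]
    apply convexHull_min _ (convex_absFst _)
    rintro z ⟨p, hp, rfl⟩
    have hpP : intPt p ∈ P := hPe ▸ subset_convexHull ℝ _ ⟨p, hp, rfl⟩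
    have hb := hB p hpP
    show |(p.1 : ℝ)| ≤ (ℓ : ℝ) + 2
    rw [← Int.cast_abs]
    exact_mod_cast hb
  exact hsub hx
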